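/- Let O be a discrete valuation ring with uniformizer π and fraction field K. Let T be a free O-module of finite rank with a continuous action of a profinite group G, let V = T ⊗ K and A = V/T. If dim_K V^G = dim_k (A[π])^G (where k = O/π), then A^G is a divisible O-module. -/

import Mathlib

/-- The fixed points of a family of endomorphisms (e.g. an induced group action). -/
def fixedSubmodule {R M G : Type*} [CommRing R] [AddCommGroup M] [Module R M]
    (σ : G → M →ₗ[R] M) : Submodule R M where
  carrier := {m | ∀ g : G, σ g m = m}
  add_mem' := by intro a b ha hb g; rw [map_add, ha g, hb g]
  zero_mem' := by intro g; simp
  smul_mem' := by intro c a ha g; rw [map_smul, ha g]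

/-- The action induced on the torsion quotient A = V/T by a G-action on V stabilizing the
lattice T. -/
def quotAct {O K V G : Type*} [CommRing O] [Field K] [Algebra O K]
    [AddCommGroup V] [Module O V] [Module K V] [IsScalarTower O K V] [Group G]
    (ρ : Representation K G V) (T : Submodule O V)
    (hstab : ∀ g : G, T ≤ T.comap ((ρ g).restrictScalars O)) (g : G) :
    (V ⧸ T) →ₗ[O] (V ⧸ T) :=
  Submodule.mapQ T T ((ρ g).restrictScalars O) (hstab g)

lemma mem_fixedSubmodule {R M G : Type*} [CommRing R] [AddCommGroup M] [Module R M]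
    (σ : G → M →ₗ[R] M) (m : M) : m ∈ fixedSubmodule σ ↔ ∀ g : G, σ g m = m := Iff.rfl

lemma quotAct_mkQ {O K V G : Type*} [CommRing O] [Field K] [Algebra O K]
    [AddCommGroup V] [Module O V] [Module K V] [IsScalarTower O K V] [Group G]
    (ρ : Representation K G V) (T : Submodule O V)
    (hstab : ∀ g : G, T ≤ T.comap ((ρ g).restrictScalars O)) (g : G) (v : V) :
    quotAct ρ T hstab g (T.mkQ v) = T.mkQ (ρ g v) := by
  simp [quotAct, Submodule.mkQ_apply, Submodule.mapQ_apply]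

/- STATEMENT 0: O a DVR with uniformizer π, fraction field K, residue field k = O/π; T a free
finite-rank O-lattice in V = T ⊗ K with G-action, A = V/T.  If dim_K V^G = dim_k (A[π])^G,
then A^G is a divisible O-module. -/
theorem stmt_0 {O : Type*} [CommRing O] [IsDomain O] [IsDiscreteValuationRing O]
    {π : O} (hπ : Irreducible π)
    {K : Type*} [Field K] [Algebra O K] [IsFractionRing O K]
    {G : Type*} [Group G]
    {V : Type*} [AddCommGroup V] [Module O V] [Module K V] [IsScalarTower O K V]
    (ρ : Representation K G V)
    (T : Submodule O V) [Module.Free O T] [Module.Finite O T]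
    (hspan : Submodule.span K (T : Set V) = ⊤)
    (hstab : ∀ g : G, T ≤ T.comap ((ρ g).restrictScalars O))
    (hdim : Module.finrank K ρ.invariants =
      Module.finrank (O ⧸ Ideal.span {π})
        (Submodule.torsionBy O (fixedSubmodule (quotAct ρ T hstab)) π)) :
    ∀ a ∈ fixedSubmodule (quotAct ρ T hstab), ∀ c : O, c ≠ 0 →
      ∃ b ∈ fixedSubmodule (quotAct ρ T hstab), c • b = a := by
  classical
  have hπ0 : π ≠ 0 := hπ.ne_zero
  have halg : Function.Injective (algebraMap O K) := IsFractionRing.injective O K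
  have halg0 : ∀ c : O, c ≠ 0 → algebraMap O K c ≠ 0 := by
    intro c hc h
    exact hc (halg (by rwa [map_zero]))
  -- cancellation
  have hcancel : ∀ (c : O), c ≠ 0 → ∀ v : V, c • ((algebraMap O K c)⁻¹ • v) = v := by
    intro c hc v
    rw [← algebraMap_smul K c ((algebraMap O K c)⁻¹ • v), smul_smul,
      mul_inv_cancel₀ (halg0 c hc), one_smul]
  have hcomm : ∀ (c : O) (kk : K) (v : V), c • kk • v = kk • c • v := by
    intro c kk v
    rw [← algebraMap_smul K c (kk • v), ← algebraMap_smul K c v, smul_smul, smul_smul, mul_comm]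
  -- common denominators
  have hden : ∀ v : V, ∃ c : O, c ≠ 0 ∧ c • v ∈ T := by
    intro v
    have hv : v ∈ Submodule.span K (T : Set V) := by rw [hspan]; trivial
    induction hv using Submodule.span_induction with
    | mem x hx => exact ⟨1, one_ne_zero, by simpa using hx⟩
    | zero => exact ⟨1, one_ne_zero, by simp⟩
    | add x y hx hy ihx ihy =>
      obtain ⟨c, hc, hcT⟩ := ihx
      obtain ⟨d, hd, hdT⟩ := ihy
      refine ⟨c * d, mul_ne_zero hc hd, ?_⟩
      rw [smul_add]
      have h1 : (c * d) • x = d • (c • x) := by rw [mul_comm, mul_smul]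
      have h2 : (c * d) • y = c • (d • y) := by rw [mul_smul]
      rw [h1, h2]
      exact T.add_mem (T.smul_mem d hcT) (T.smul_mem c hdT)
    | smul a x hx ih =>
      obtain ⟨c, hc, hcT⟩ := ih
      obtain ⟨p, q, hq, hpq⟩ := IsFractionRing.div_surjective (A := O) a
      have hq0 : q ≠ 0 := nonZeroDivisors.ne_zero hq
      refine ⟨q * c, mul_ne_zero hq0 hc, ?_⟩
      have key : (q * c) • (a • x) = p • (c • x) := by
        rw [← algebraMap_smul K (q * c) (a • x), ← algebraMap_smul K p (c • x),
          ← algebraMap_smul K c x, smul_smul, smul_smul]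
        congr 1
        rw [map_mul, ← hpq, mul_div_assoc', div_eq_iff (halg0 q hq0)]
        ring
      rw [key]
      exact T.smul_mem p hcT
  -- the fixed submodule and the divisible part D
  have hmapsto : ∀ v ∈ ρ.invariants, T.mkQ v ∈ fixedSubmodule (quotAct ρ T hstab) := by
    intro v hv
    rw [mem_fixedSubmodule]
    intro g
    rw [quotAct_mkQ, (ρ.mem_invariants v).mp hv g]
  set Wo : Submodule O V := Submodule.restrictScalars O ρ.invariants with hWo
  set D : Submodule O (V ⧸ T) := Wo.map T.mkQ with hD
  have hmemD : ∀ v ∈ ρ.invariants, T.mkQ v ∈ D := fun v hv =>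
    Submodule.mem_map_of_mem (p := Wo) hv
  have hD_le : D ≤ fixedSubmodule (quotAct ρ T hstab) := by
    rintro _ ⟨v, hv, rfl⟩
    exact hmapsto v hv
  -- the lattice of invariants
  set S : Submodule O V := Wo ⊓ T with hS
  have hSspan : Submodule.span K (S : Set V) = ρ.invariants := by
    apply le_antisymm
    · rw [Submodule.span_le]
      exact fun x hx => (Submodule.mem_inf.mp hx).1
    · intro v hv
      obtain ⟨c, hc, hcT⟩ := hden v
      have hcv : c • v ∈ S := Submodule.mem_inf.mpr ⟨Wo.smul_mem c hv, hcT⟩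
      have hv' : (algebraMap O K c)⁻¹ • (c • v) ∈ Submodule.span K (S : Set V) :=
        Submodule.smul_mem _ _ (Submodule.subset_span hcv)
      rwa [← hcomm c ((algebraMap O K c)⁻¹) v, hcancel c hc v] at hv'
  -- a basis for S
  obtain ⟨r, b'⟩ := Submodule.basisOfPid (Module.Free.chooseBasis O ↥T) (S.comap T.subtype)
  set b : Module.Basis (Fin r) O ↥S :=
    b'.map (Submodule.comapSubtypeEquivOfLe (inf_le_right : Wo ⊓ T ≤ T)) with hb
  have hbW : ∀ i : Fin r, ((b i : V)) ∈ Wo := fun i => (Submodule.mem_inf.mp (b i).2).1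
  have hbT : ∀ i : Fin r, ((b i : V)) ∈ T := fun i => (Submodule.mem_inf.mp (b i).2).2
  have hbspan : Submodule.span K (Set.range fun i => ((b i : V))) = ρ.invariants := by
    have h1 : Submodule.span O (Set.range fun i => ((b i : V))) = S := by
      have h0 : (Set.range fun i => ((b i : V))) = S.subtype '' Set.range b := by
        ext y
        simp [Set.range_comp]
      rw [h0, ← Submodule.map_span, b.span_eq, Submodule.map_subtype_top]
    have h2 := Submodule.span_span_of_tower (R := O) K (Set.range fun i => ((b i : V)))
    rw [h1] at h2
    exact h2.symm.trans hSspan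
  haveI hFD_W : FiniteDimensional K ρ.invariants := by
    rw [← hbspan]
    exact FiniteDimensional.span_of_finite K (Set.finite_range _)
  have hrankW_le : Module.finrank K ρ.invariants ≤ r := by
    rw [← hbspan]
    simpa [Set.finrank] using finrank_range_le_card (R := K) (fun i => ((b i : V)))
  -- the residue field
  have hspanπ : Ideal.span {π} = IsLocalRing.maximalIdeal O :=
    ((IsDiscreteValuationRing.irreducible_iff_uniformizer π).mp hπ).symm
  haveI hMax : (Ideal.span {π}).IsMaximal := hspanπ ▸ IsLocalRing.maximalIdeal.isMaximal O
  letI : Field (O ⧸ Ideal.span {π}) := Ideal.Quotient.field _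
  have hkalg : Function.Surjective (algebraMap O (O ⧸ Ideal.span {π})) := by
    rw [Ideal.Quotient.algebraMap_eq]
    exact Ideal.Quotient.mk_surjective
  -- A[π] is finite dimensional over the residue field
  set Aπ : Submodule O (V ⧸ T) := Submodule.torsionBy O (V ⧸ T) π with hAπ
  have hψmem : ∀ t : ↥T, T.mkQ ((algebraMap O K π)⁻¹ • (t : V)) ∈ Aπ := by
    intro t
    rw [hAπ, Submodule.mem_torsionBy_iff, ← map_smul, hcancel π hπ0,
      Submodule.mkQ_apply, Submodule.Quotient.mk_eq_zero]
    exact t.2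
  set ψ : ↥T →ₗ[O] ↥Aπ := LinearMap.codRestrict Aπ
    (T.mkQ.comp (((LinearMap.lsmul K V (algebraMap O K π)⁻¹).restrictScalars O).comp T.subtype))
    (fun t => hψmem t) with hψ
  have hψsurj : Function.Surjective ψ := by
    rintro ⟨y, hy⟩
    obtain ⟨v, rfl⟩ := T.mkQ_surjective y
    rw [Submodule.mem_torsionBy_iff, ← map_smul, Submodule.mkQ_apply,
      Submodule.Quotient.mk_eq_zero] at hy
    refine ⟨⟨π • v, hy⟩, ?_⟩
    apply Subtype.ext
    show T.mkQ ((algebraMap O K π)⁻¹ • (π • v)) = T.mkQ v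
    rw [← hcomm π ((algebraMap O K π)⁻¹) v, hcancel π hπ0 v]
  haveI hAfinO : Module.Finite O ↥Aπ := Module.Finite.of_surjective ψ hψsurj
  haveI hAtower : IsScalarTower O (O ⧸ Ideal.span {π}) ↥Aπ :=
    inferInstanceAs (IsScalarTower O (O ⧸ (O ∙ π)) ↥(Submodule.torsionBy O (V ⧸ T) π))
  haveI hAfin : Module.Finite (O ⧸ Ideal.span {π}) ↥Aπ :=
    Module.Finite.of_restrictScalars_finite O _ _
  -- Tπ = (A^G)[π] is finite dimensional
  set F : Submodule O (V ⧸ T) := fixedSubmodule (quotAct ρ T hstab) with hF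
  set Tπ : Submodule O ↥F := Submodule.torsionBy O ↥F π with hTπ
  haveI hTtower : IsScalarTower O (O ⧸ Ideal.span {π}) ↥Tπ :=
    inferInstanceAs (IsScalarTower O (O ⧸ (O ∙ π)) ↥(Submodule.torsionBy O ↥F π))
  have hι0mem : ∀ z : ↥Tπ, (F.subtype.comp Tπ.subtype) z ∈ Aπ := by
    intro z
    rw [hAπ, Submodule.mem_torsionBy_iff]
    have hz : π • (z : ↥F) = 0 := (Submodule.mem_torsionBy_iff _ _).mp z.2
    calc π • ((z : ↥F) : V ⧸ T) = ((π • (z : ↥F) : ↥F) : V ⧸ T) := rfl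
    _ = 0 := by rw [hz]; rfl
  set ι : ↥Tπ →ₗ[O ⧸ Ideal.span {π}] ↥Aπ :=
    (LinearMap.codRestrict Aπ (F.subtype.comp Tπ.subtype) hι0mem).extendScalarsOfSurjective
      hkalg with hι
  have hιinj : Function.Injective ι := by
    intro z w hzw
    have h1 : ((z : ↥F) : V ⧸ T) = ((w : ↥F) : V ⧸ T) :=
      congrArg (fun u : ↥Aπ => (u : V ⧸ T)) hzw
    exact Subtype.ext (Subtype.ext h1)
  haveI hTπFD : FiniteDimensional (O ⧸ Ideal.span {π}) ↥Tπ :=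
    FiniteDimensional.of_injective ι hιinj
  -- the independent family in Tπ
  have hxmem : ∀ i : Fin r, (algebraMap O K π)⁻¹ • ((b i : V)) ∈ ρ.invariants :=
    fun i => Submodule.smul_mem _ _ (hbW i)
  have hxF : ∀ i : Fin r, T.mkQ ((algebraMap O K π)⁻¹ • (b i : V)) ∈ F :=
    fun i => hmapsto _ (hxmem i)
  have hxtor : ∀ i : Fin r,
      (⟨T.mkQ ((algebraMap O K π)⁻¹ • (b i : V)), hxF i⟩ : ↥F) ∈ Tπ := by
    intro i
    rw [hTπ, Submodule.mem_torsionBy_iff]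
    apply Subtype.ext
    show π • T.mkQ ((algebraMap O K π)⁻¹ • (b i : V)) = 0
    rw [← map_smul, hcancel π hπ0, Submodule.mkQ_apply, Submodule.Quotient.mk_eq_zero]
    exact hbT i
  set x : Fin r → ↥Tπ := fun i =>
    ⟨⟨T.mkQ ((algebraMap O K π)⁻¹ • (b i : V)), hxF i⟩, hxtor i⟩ with hx
  have hxval : ∀ i : Fin r,
      (F.subtype.comp Tπ.subtype) (x i) = T.mkQ ((algebraMap O K π)⁻¹ • (b i : V)) :=
    fun i => rfl
  have hxli : LinearIndependent (O ⧸ Ideal.span {π}) x := by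
    refine (Fintype.linearIndependent_iff (R := O ⧸ Ideal.span {π}) (M := ↥Tπ)).mpr ?_
    intro g hg i
    choose c hc using fun j => hkalg (g j)
    have hg' : (∑ j, c j • x j) = 0 := by
      rw [← hg]
      refine Finset.sum_congr rfl fun j _ => ?_
      rw [← hc j, Ideal.Quotient.algebraMap_eq, Submodule.torsionBy.mk_ideal_smul]
    have h3 := congrArg (F.subtype.comp Tπ.subtype) hg'
    rw [map_sum, map_zero] at h3
    simp only [map_smul, hxval] at h3
    have h4 : T.mkQ ((algebraMap O K π)⁻¹ • ∑ j, c j • (b j : V)) = 0 := by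
      rw [Finset.smul_sum, map_sum, ← h3]
      refine Finset.sum_congr rfl fun j _ => ?_
      rw [← hcomm, map_smul]
    set s0 : V := ∑ j, c j • (b j : V) with hs0
    have hw0T : (algebraMap O K π)⁻¹ • s0 ∈ T := by
      rwa [Submodule.mkQ_apply, Submodule.Quotient.mk_eq_zero] at h4
    have hs0W : s0 ∈ Wo := Submodule.sum_mem _ fun j _ => Wo.smul_mem _ (hbW j)
    have hw0W : (algebraMap O K π)⁻¹ • s0 ∈ Wo := Submodule.smul_mem ρ.invariants _ hs0W
    have hw0S : (algebraMap O K π)⁻¹ • s0 ∈ S := Submodule.mem_inf.mpr ⟨hw0W, hw0T⟩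
    have hπw : π • (⟨(algebraMap O K π)⁻¹ • s0, hw0S⟩ : ↥S) = ∑ j, c j • b j := by
      apply Subtype.ext
      show π • ((algebraMap O K π)⁻¹ • s0) = _
      rw [hcancel π hπ0, Submodule.coe_sum]
      simp [hs0]
    have h6 := congrArg (fun z => (b.repr z) i) hπw
    simp only [map_smul, Finsupp.smul_apply, smul_eq_mul, Module.Basis.repr_sum_self] at h6
    rw [← hc i, Ideal.Quotient.algebraMap_eq]
    exact Ideal.Quotient.eq_zero_iff_mem.mpr (Ideal.mem_span_singleton.mpr
      ⟨(b.repr ⟨(algebraMap O K π)⁻¹ • s0, hw0S⟩) i, h6.symm⟩)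
  have hrle : r ≤ Module.finrank (O ⧸ Ideal.span {π}) ↥Tπ := by
    simpa using hxli.fintype_card_le_finrank
  have hxspan : Submodule.span (O ⧸ Ideal.span {π}) (Set.range x) = ⊤ :=
    LinearIndependent.span_eq_top_of_card_eq_finrank' (K := O ⧸ Ideal.span {π}) (V := ↥Tπ) hxli (by
      rw [Fintype.card_fin]
      refine le_antisymm hrle ?_
      rw [← hdim]
      exact hrankW_le)
  -- key step: the π-torsion of F is contained in D
  have hkey : ∀ a : V ⧸ T, ∀ ha : a ∈ F, π • a = 0 → a ∈ D := by
    intro a ha h0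
    have haF : (⟨a, ha⟩ : ↥F) ∈ Tπ := by
      rw [hTπ, Submodule.mem_torsionBy_iff]
      exact Subtype.ext h0
    have ht : (⟨⟨a, ha⟩, haF⟩ : ↥Tπ) ∈
        Submodule.span (O ⧸ Ideal.span {π}) (Set.range x) := by
      rw [hxspan]; trivial
    rw [Submodule.mem_span_range_iff_exists_fun] at ht
    obtain ⟨g, hg⟩ := ht
    choose c hc using fun j => hkalg (g j)
    have hg' : (∑ j, c j • x j) = (⟨⟨a, ha⟩, haF⟩ : ↥Tπ) := by
      rw [← hg]
      refine Finset.sum_congr rfl fun j _ => ?_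
      rw [← hc j, Ideal.Quotient.algebraMap_eq, Submodule.torsionBy.mk_ideal_smul]
    have h3 := congrArg (F.subtype.comp Tπ.subtype) hg'
    rw [map_sum] at h3
    simp only [map_smul, hxval] at h3
    have h4 : (F.subtype.comp Tπ.subtype) (⟨⟨a, ha⟩, haF⟩ : ↥Tπ) = a := rfl
    rw [h4] at h3
    rw [← h3]
    exact Submodule.sum_mem _ fun j _ => Submodule.smul_mem _ _ (hmemD _ (hxmem j))
  -- every element of the quotient is π-power torsion
  have htor : ∀ a : V ⧸ T, ∃ n : ℕ, π ^ n • a = 0 := by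
    intro a
    obtain ⟨v, rfl⟩ := T.mkQ_surjective a
    obtain ⟨c, hc, hcT⟩ := hden v
    obtain ⟨n, u, hu⟩ := IsDiscreteValuationRing.eq_unit_mul_pow_irreducible hc hπ
    refine ⟨n, ?_⟩
    have h1 : c • T.mkQ v = 0 := by
      rw [← map_smul, Submodule.mkQ_apply, Submodule.Quotient.mk_eq_zero]
      exact hcT
    have h2 : π ^ n • T.mkQ v = ((u⁻¹ : Oˣ) : O) • (c • T.mkQ v) := by
      rw [smul_smul]
      congr 1
      rw [hu, ← mul_assoc, Units.inv_mul, one_mul]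
    rw [h2, h1, smul_zero]
  -- main induction: F is contained in D
  have hmain : ∀ n : ℕ, ∀ a : V ⧸ T, a ∈ F → π ^ n • a = 0 → a ∈ D := by
    intro n
    induction n with
    | zero =>
      intro a ha h0
      rw [pow_zero, one_smul] at h0
      rw [h0]
      exact D.zero_mem
    | succ n ih =>
      intro a ha h0
      have ha' : π ^ n • a ∈ F := F.smul_mem _ ha
      have h1 : π • (π ^ n • a) = 0 := by
        rw [smul_smul, ← pow_succ']
        exact h0
      obtain ⟨v, hv, hva⟩ := hkey _ ha' h1
      have hvinv : v ∈ ρ.invariants := hv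
      have hd0inv : (algebraMap O K (π ^ n))⁻¹ • v ∈ ρ.invariants :=
        Submodule.smul_mem _ _ hvinv
      have hd0D : T.mkQ ((algebraMap O K (π ^ n))⁻¹ • v) ∈ D := hmemD _ hd0inv
      have hπn0 : (π : O) ^ n ≠ 0 := pow_ne_zero n hπ0
      have hd0 : π ^ n • T.mkQ ((algebraMap O K (π ^ n))⁻¹ • v) = π ^ n • a := by
        rw [← map_smul, hcancel (π ^ n) hπn0, hva]
      have h2 : π ^ n • (a - T.mkQ ((algebraMap O K (π ^ n))⁻¹ • v)) = 0 := by
        rw [smul_sub, hd0, sub_self]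
      have h3 := ih _ (F.sub_mem ha (hD_le hd0D)) h2
      have h5 := D.add_mem h3 hd0D
      simpa using h5
  -- conclusion: divisibility
  intro a ha c hc
  obtain ⟨n, hn⟩ := htor a
  obtain ⟨v, hv, rfl⟩ := hmain n a ha hn
  have hvinv : v ∈ ρ.invariants := hv
  have hcinv : (algebraMap O K c)⁻¹ • v ∈ ρ.invariants := Submodule.smul_mem _ _ hvinv
  refine ⟨T.mkQ ((algebraMap O K c)⁻¹ • v), hD_le (hmemD _ hcinv), ?_⟩
  rw [← map_smul, hcancel c hc]
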